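/- Let z : 2^[n] → ℝ be monotone nondecreasing and submodular, let h : [n] → ℝ be positive costs, and let I, I* ⊆ [n] with z(I*) = z([n]). If j ∈ [n] satisfies (z(I∪{j}) − z(I))/h(j) ≥ (1−ε)·(z(I∪{j'}) − z(I))/h(j') for all j' ∈ I* \ I (where 0 < ε < 1), then (z(I∪{j}) − z(I))/h(j) ≥ (1−ε)·(z(I*) − z(I))/h(I*), where h(I*) = ∑_{i∈I*} h(i). -/
import Mathlib


theorem stmt_10 {n : ℕ} (hn : 0 < n)
    (z : Finset (Fin n) → ℝ)
    (hmono : ∀ X Y : Finset (Fin n), X ⊆ Y → z X ≤ z Y)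
    (hsub : ∀ X Y : Finset (Fin n),
      ∑ j ∈ Y \ X, (z (insert j X) - z X) ≥ z (X ∪ Y) - z X)
    (h : Fin n → ℝ) (hpos : ∀ i, 0 < h i)
    (I Istar : Finset (Fin n)) (hopt : z Istar = z Finset.univ)
    (ε : ℝ) (hε0 : 0 < ε) (hε1 : ε < 1)
    (j : Fin n)
    (hj : ∀ j' ∈ Istar \ I,
      (z (insert j I) - z I) / h j ≥
        (1 - ε) * ((z (insert j' I) - z I) / h j')) :
    (z (insert j I) - z I) / h j ≥
      (1 - ε) * ((z Istar - z I) / (∑ i ∈ Istar, h i)) := by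
  set θ := (z (insert j I) - z I) / h j with hθ
  have hθnn : 0 ≤ θ :=
    div_nonneg (sub_nonneg.2 (hmono I (insert j I) (Finset.subset_insert j I)))
      (hpos j).le
  rcases Finset.eq_empty_or_nonempty Istar with hst | hst
  · simp [hst]
    nlinarith [hθnn]
  · have hS : 0 < ∑ i ∈ Istar, h i := Finset.sum_pos (fun i _ => hpos i) hst
    rw [ge_iff_le, ← mul_div_assoc, div_le_iff₀ hS]
    -- key: (1-ε)*(z Istar - z I) ≤ θ * S
    have hunion : z (I ∪ Istar) = z Istar := by
      have h1 : z (I ∪ Istar) ≤ z Finset.univ :=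
        hmono _ _ (Finset.subset_univ _)
      have h2 : z Istar ≤ z (I ∪ Istar) :=
        hmono _ _ Finset.subset_union_right
      linarith [hopt]
    have hsum : ∑ j' ∈ Istar \ I, (z (insert j' I) - z I) ≥ z Istar - z I := by
      have := hsub I Istar
      rwa [hunion] at this
    have hterm : ∀ j' ∈ Istar \ I, (1 - ε) * (z (insert j' I) - z I) ≤ θ * h j' := by
      intro j' hj'
      have hh := hpos j'
      have := hj j' hj'
      have h2 : (1 - ε) * ((z (insert j' I) - z I) / h j') * h j' ≤ θ * h j' :=
        mul_le_mul_of_nonneg_right this hh.le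
      rwa [mul_assoc, div_mul_cancel₀ _ hh.ne'] at h2
    have hchain : (1 - ε) * (z Istar - z I) ≤ θ * ∑ j' ∈ Istar \ I, h j' := by
      calc (1 - ε) * (z Istar - z I)
          ≤ (1 - ε) * ∑ j' ∈ Istar \ I, (z (insert j' I) - z I) := by
            apply mul_le_mul_of_nonneg_left hsum (by linarith)
        _ = ∑ j' ∈ Istar \ I, (1 - ε) * (z (insert j' I) - z I) := by
            rw [Finset.mul_sum]
        _ ≤ ∑ j' ∈ Istar \ I, θ * h j' := Finset.sum_le_sum hterm
        _ = θ * ∑ j' ∈ Istar \ I, h j' := (Finset.mul_sum _ _ _).symm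
    have hmonoS : ∑ j' ∈ Istar \ I, h j' ≤ ∑ i ∈ Istar, h i :=
      Finset.sum_le_sum_of_subset_of_nonneg (Finset.sdiff_subset)
        (fun i _ _ => (hpos i).le)
    nlinarith [hθnn]
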